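/- Let F be a field, q ∈ F and f, g ∈ F[h]. With respect to the ℤ-grading of H_q(f,g) in which x has degree 1, h has degree 0 and y has degree −1, the homogeneous component of degree 0 is H_0 = ⊕_{i≥0} x^i F[h] y^i, and for every k ≥ 0 the homogeneous component of degree k equals x^k H_0 and the homogeneous component of degree −k equals H_0 y^k. -/

import Mathlib

open Polynomial

/-- The three generators `x`, `y`, `h` of a quantum generalized Heisenberg algebra. -/
inductive QGHAGen : Type
  | x : QGHAGen
  | y : QGHAGen
  | h : QGHAGen

/-- The defining relations of the quantum generalized Heisenberg algebra `H_q(f,g)`: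
`h*x = x*f(h)`, `y*h = f(h)*y`, and `y*x - q*(x*y) = g(h)`. -/
inductive QGHARel (F : Type*) [Field F] (q : F) (f g : F[X]) :
    FreeAlgebra F QGHAGen → FreeAlgebra F QGHAGen → Prop
  | hx : QGHARel F q f g
      (FreeAlgebra.ι F QGHAGen.h * FreeAlgebra.ι F QGHAGen.x)
      (FreeAlgebra.ι F QGHAGen.x * aeval (FreeAlgebra.ι F QGHAGen.h) f)
  | yh : QGHARel F q f g
      (FreeAlgebra.ι F QGHAGen.y * FreeAlgebra.ι F QGHAGen.h)
      (aeval (FreeAlgebra.ι F QGHAGen.h) f * FreeAlgebra.ι F QGHAGen.y)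
  | yx : QGHARel F q f g
      (FreeAlgebra.ι F QGHAGen.y * FreeAlgebra.ι F QGHAGen.x)
      (q • (FreeAlgebra.ι F QGHAGen.x * FreeAlgebra.ι F QGHAGen.y)
        + aeval (FreeAlgebra.ι F QGHAGen.h) g)

/-- The quantum generalized Heisenberg algebra `H_q(f,g)`. -/
def QGHA (F : Type*) [Field F] (q : F) (f g : F[X]) : Type _ :=
  RingQuot (QGHARel F q f g)

namespace QGHA

variable {F : Type*} [Field F] (q : F) (f g : F[X])

instance : Ring (QGHA F q f g) :=
  inferInstanceAs (Ring (RingQuot (QGHARel F q f g)))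

instance : Algebra F (QGHA F q f g) :=
  inferInstanceAs (Algebra F (RingQuot (QGHARel F q f g)))

/-- The generator `x` of `H_q(f,g)`. -/
def x : QGHA F q f g :=
  RingQuot.mkAlgHom F (QGHARel F q f g) (FreeAlgebra.ι F QGHAGen.x)

/-- The generator `y` of `H_q(f,g)`. -/
def y : QGHA F q f g :=
  RingQuot.mkAlgHom F (QGHARel F q f g) (FreeAlgebra.ι F QGHAGen.y)

/-- The generator `h` of `H_q(f,g)`. -/
def h : QGHA F q f g :=
  RingQuot.mkAlgHom F (QGHARel F q f g) (FreeAlgebra.ι F QGHAGen.h)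

end QGHA

/-- The subspace `x^i F[h] y^j` of `H_q(f,g)`. -/
noncomputable def QGHA.Mij {F : Type*} [Field F] (q : F) (f g : F[X]) (i j : ℕ) :
    Submodule F (QGHA F q f g) :=
  Submodule.span F
    {a | ∃ p : F[X], a = QGHA.x q f g ^ i * aeval (QGHA.h q f g) p * QGHA.y q f g ^ j}

/-- The degree-`k` component of the ℤ-grading of `H_q(f,g)` in which `x` has degree `1`,
`h` has degree `0` and `y` has degree `−1`: it is spanned by the monomials
`x^i p(h) y^j` with `i − j = k`. -/
noncomputable def QGHA.grading {F : Type*} [Field F] (q : F) (f g : F[X]) (k : ℤ) :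
    Submodule F (QGHA F q f g) :=
  ⨆ (i : ℕ) (j : ℕ) (_ : (i : ℤ) - (j : ℤ) = k), QGHA.Mij q f g i j

namespace QGHAAux

open QGHA

variable {F : Type*} [Field F] (q : F) (f g : F[X])

/-- `n`-fold composition iterate of `f`. -/
noncomputable def uP (f : F[X]) : ℕ → F[X]
  | 0 => X
  | n + 1 => (uP f n).comp f

theorem uP_comm (f : F[X]) : ∀ n, (uP f n).comp f = f.comp (uP f n)
  | 0 => by simp [uP]
  | n + 1 => by
    show ((uP f n).comp f).comp f = f.comp ((uP f n).comp f)
    rw [← Polynomial.comp_assoc, ← uP_comm f n]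

theorem rel_hx : h q f g * x q f g = x q f g * aeval (h q f g) f := by
  have h1 := RingQuot.mkAlgHom_rel F (QGHARel.hx (F := F) (q := q) (f := f) (g := g))
  rw [map_mul, map_mul, ← Polynomial.aeval_algHom_apply] at h1
  exact h1

theorem rel_yh : y q f g * h q f g = aeval (h q f g) f * y q f g := by
  have h1 := RingQuot.mkAlgHom_rel F (QGHARel.yh (F := F) (q := q) (f := f) (g := g))
  rw [map_mul, map_mul, ← Polynomial.aeval_algHom_apply] at h1
  exact h1

theorem rel_yx : y q f g * x q f g = q • (x q f g * y q f g) + aeval (h q f g) g := by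
  have h1 := RingQuot.mkAlgHom_rel F (QGHARel.yx (F := F) (q := q) (f := f) (g := g))
  rw [map_mul, map_add, map_smul, map_mul, ← Polynomial.aeval_algHom_apply] at h1
  exact h1

theorem hpow_x (n : ℕ) :
    h q f g ^ n * x q f g = x q f g * aeval (h q f g) f ^ n := by
  induction n with
  | zero => simp
  | succ n ih =>
    rw [pow_succ, mul_assoc, rel_hx, ← mul_assoc, ih, mul_assoc, ← pow_succ]

theorem poly_x (p : F[X]) :
    aeval (h q f g) p * x q f g = x q f g * aeval (h q f g) (p.comp f) := by
  induction p using Polynomial.induction_on' with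
  | add p r hp hr =>
    rw [map_add, add_mul, hp, hr, Polynomial.add_comp, map_add, mul_add]
  | monomial n a =>
    rw [Polynomial.aeval_monomial, Polynomial.monomial_comp, map_mul, Polynomial.aeval_C,
      mul_assoc, hpow_x, ← mul_assoc, Algebra.commutes, mul_assoc, map_pow]

theorem poly_x_pow (k : ℕ) (p : F[X]) :
    aeval (h q f g) p * x q f g ^ k = x q f g ^ k * aeval (h q f g) (p.comp (uP f k)) := by
  induction k generalizing p with
  | zero => simp [uP]
  | succ k ih =>
    rw [pow_succ', ← mul_assoc, poly_x, mul_assoc, ih, ← mul_assoc, ← pow_succ']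
    congr 2
    rw [Polynomial.comp_assoc, ← uP_comm]
    rfl

theorem y_hpow (n : ℕ) :
    y q f g * h q f g ^ n = aeval (h q f g) f ^ n * y q f g := by
  induction n with
  | zero => simp
  | succ n ih =>
    rw [pow_succ, ← mul_assoc, ih, mul_assoc, rel_yh, ← mul_assoc, ← pow_succ]

theorem y_poly (p : F[X]) :
    y q f g * aeval (h q f g) p = aeval (h q f g) (p.comp f) * y q f g := by
  induction p using Polynomial.induction_on' with
  | add p r hp hr =>
    rw [map_add, mul_add, hp, hr, Polynomial.add_comp, map_add, add_mul]
  | monomial n a =>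
    rw [Polynomial.aeval_monomial, Polynomial.monomial_comp, map_mul, Polynomial.aeval_C,
      ← mul_assoc, ← Algebra.commutes, mul_assoc, y_hpow, ← mul_assoc, Algebra.commutes,
      map_pow, Algebra.commutes a]

theorem mem_Mij (i j : ℕ) (p : F[X]) :
    x q f g ^ i * aeval (h q f g) p * y q f g ^ j ∈ Mij q f g i j :=
  Submodule.subset_span ⟨p, rfl⟩

theorem Mij_le_grading (i j : ℕ) : Mij q f g i j ≤ grading q f g ((i : ℤ) - j) :=
  le_iSup_of_le i (le_iSup_of_le j (le_iSup_of_le rfl le_rfl))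

theorem mono_mem_grading {k : ℤ} (i j : ℕ) (p : F[X]) (hij : (i : ℤ) - j = k) :
    x q f g ^ i * aeval (h q f g) p * y q f g ^ j ∈ grading q f g k :=
  hij ▸ Mij_le_grading q f g i j (mem_Mij q f g i j p)

theorem grading_le {k : ℤ} {N : Submodule F (QGHA F q f g)}
    (hN : ∀ i j : ℕ, (i : ℤ) - j = k → ∀ p : F[X],
      x q f g ^ i * aeval (h q f g) p * y q f g ^ j ∈ N) :
    grading q f g k ≤ N := by
  refine iSup_le fun i => iSup_le fun j => iSup_le fun hij => Submodule.span_le.mpr ?_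
  rintro a ⟨p, rfl⟩
  exact hN i j hij p

theorem x_mul_mem {k : ℤ} {c : QGHA F q f g} (hc : c ∈ grading q f g k) :
    x q f g * c ∈ grading q f g (k + 1) := by
  have hle : grading q f g k ≤ (grading q f g (k + 1)).comap (LinearMap.mulLeft F (x q f g)) := by
    refine grading_le q f g fun i j hij p => ?_
    have he : x q f g * (x q f g ^ i * aeval (h q f g) p * y q f g ^ j)
        = x q f g ^ (i + 1) * aeval (h q f g) p * y q f g ^ j := by
      rw [pow_succ', mul_assoc, mul_assoc, mul_assoc]
    simp only [Submodule.mem_comap, LinearMap.mulLeft_apply]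
    rw [he]
    exact mono_mem_grading q f g (i + 1) j p (by push_cast; omega)
  exact hle hc

theorem poly_mul_mem {k : ℤ} (r : F[X]) {c : QGHA F q f g} (hc : c ∈ grading q f g k) :
    aeval (h q f g) r * c ∈ grading q f g k := by
  have hle : grading q f g k ≤ (grading q f g k).comap
      (LinearMap.mulLeft F (aeval (h q f g) r)) := by
    refine grading_le q f g fun i j hij p => ?_
    have he : aeval (h q f g) r * (x q f g ^ i * aeval (h q f g) p * y q f g ^ j)
        = x q f g ^ i * aeval (h q f g) (r.comp (uP f i) * p) * y q f g ^ j := by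
      rw [mul_assoc, ← mul_assoc (aeval (h q f g) r), poly_x_pow, map_mul]
      rw [mul_assoc, mul_assoc, mul_assoc]
    simp only [Submodule.mem_comap, LinearMap.mulLeft_apply]
    rw [he]
    exact mono_mem_grading q f g i j _ hij
  exact hle hc

theorem y_mul_mono_mem (k l : ℕ) (r : F[X]) :
    y q f g * (x q f g ^ k * aeval (h q f g) r * y q f g ^ l) ∈
      grading q f g ((k : ℤ) - l - 1) := by
  induction k generalizing r with
  | zero =>
    have he : y q f g * (x q f g ^ 0 * aeval (h q f g) r * y q f g ^ l)
        = x q f g ^ 0 * aeval (h q f g) (r.comp f) * y q f g ^ (l + 1) := by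
      rw [pow_zero, one_mul, one_mul, ← mul_assoc, y_poly, mul_assoc, ← pow_succ']
    rw [he]
    exact mono_mem_grading q f g 0 (l + 1) _ (by push_cast; omega)
  | succ k ih =>
    have he : y q f g * (x q f g ^ (k + 1) * aeval (h q f g) r * y q f g ^ l)
        = q • (x q f g * (y q f g * (x q f g ^ k * aeval (h q f g) r * y q f g ^ l)))
          + aeval (h q f g) g * (x q f g ^ k * aeval (h q f g) r * y q f g ^ l) := by
      have h2 : x q f g ^ (k + 1) * aeval (h q f g) r * y q f g ^ l
          = x q f g * (x q f g ^ k * aeval (h q f g) r * y q f g ^ l) := by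
        rw [pow_succ', mul_assoc, mul_assoc, mul_assoc]
      rw [h2, ← mul_assoc, rel_yx, add_mul, smul_mul_assoc, mul_assoc]
    rw [he]
    have t1 : x q f g * (y q f g * (x q f g ^ k * aeval (h q f g) r * y q f g ^ l))
        ∈ grading q f g ((k : ℤ) - l - 1 + 1) := x_mul_mem q f g (ih r)
    have t2 : aeval (h q f g) g * (x q f g ^ k * aeval (h q f g) r * y q f g ^ l)
        ∈ grading q f g ((k : ℤ) - l) :=
      poly_mul_mem q f g g (mono_mem_grading q f g k l r rfl)
    have e1 : ((k : ℤ) - l - 1 + 1) = ((k + 1 : ℕ) : ℤ) - l - 1 := by push_cast; omega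
    have e2 : ((k : ℤ) - l) = ((k + 1 : ℕ) : ℤ) - l - 1 := by push_cast; omega
    exact Submodule.add_mem _ (Submodule.smul_mem _ q (e1 ▸ t1)) (e2 ▸ t2)

theorem y_mul_mem {k : ℤ} {c : QGHA F q f g} (hc : c ∈ grading q f g k) :
    y q f g * c ∈ grading q f g (k - 1) := by
  have hle : grading q f g k ≤ (grading q f g (k - 1)).comap (LinearMap.mulLeft F (y q f g)) := by
    refine grading_le q f g fun i j hij p => ?_
    simp only [Submodule.mem_comap, LinearMap.mulLeft_apply]
    have := y_mul_mono_mem q f g i j p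
    have e : ((i : ℤ) - j - 1) = k - 1 := by omega
    exact e ▸ this
  exact hle hc

theorem x_pow_mul_mem {k : ℤ} (n : ℕ) {c : QGHA F q f g} (hc : c ∈ grading q f g k) :
    x q f g ^ n * c ∈ grading q f g (k + n) := by
  induction n with
  | zero => simpa using hc
  | succ n ih =>
    have := x_mul_mem q f g ih
    have he : x q f g * (x q f g ^ n * c) = x q f g ^ (n + 1) * c := by
      rw [pow_succ', mul_assoc]
    have e : (k + (n : ℤ) + 1) = k + ((n + 1 : ℕ) : ℤ) := by push_cast; omega
    rw [← he]
    exact e ▸ this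

theorem y_pow_mul_mem {k : ℤ} (n : ℕ) {c : QGHA F q f g} (hc : c ∈ grading q f g k) :
    y q f g ^ n * c ∈ grading q f g (k - n) := by
  induction n with
  | zero => simpa using hc
  | succ n ih =>
    have := y_mul_mem q f g ih
    have he : y q f g * (y q f g ^ n * c) = y q f g ^ (n + 1) * c := by
      rw [pow_succ', mul_assoc]
    have e : (k - (n : ℤ) - 1) = k - ((n + 1 : ℕ) : ℤ) := by push_cast; omega
    rw [← he]
    exact e ▸ this

theorem grading_mul (m n : ℤ) :
    grading q f g m * grading q f g n ≤ grading q f g (m + n) := by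
  rw [Submodule.mul_le]
  intro a ha b hb
  revert a
  have hs : grading q f g m ≤ (grading q f g (m + n)).comap (LinearMap.mulRight F b) := by
    refine grading_le q f g fun i j hij p => ?_
    simp only [Submodule.mem_comap, LinearMap.mulRight_apply]
    have he : x q f g ^ i * aeval (h q f g) p * y q f g ^ j * b
        = x q f g ^ i * (aeval (h q f g) p * (y q f g ^ j * b)) := by
      rw [mul_assoc, mul_assoc]
    rw [he]
    have := x_pow_mul_mem q f g i (poly_mul_mem q f g p (y_pow_mul_mem q f g j hb))
    have e : (n - (j : ℤ) + i) = m + n := by omega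
    exact e ▸ this
  exact fun a ha => hs ha

theorem one_mem_grading_zero : (1 : QGHA F q f g) ∈ grading q f g 0 := by
  have he : (1 : QGHA F q f g) = x q f g ^ 0 * aeval (h q f g) (1 : F[X]) * y q f g ^ 0 := by simp
  rw [he]
  exact mono_mem_grading q f g 0 0 (1 : F[X]) (by omega)

theorem grading_zero_eq : grading q f g 0 = ⨆ i : ℕ, Mij q f g i i := by
  apply le_antisymm
  · refine iSup_le fun i => iSup_le fun j => iSup_le fun hij => ?_
    have : i = j := by omega
    subst this
    exact le_iSup (fun i => Mij q f g i i) i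
  · refine iSup_le fun i => ?_
    have := Mij_le_grading q f g i i
    rwa [sub_self] at this

theorem grading_shift_x (k : ℕ) :
    grading q f g (k : ℤ) = (grading q f g 0).map (LinearMap.mulLeft F (x q f g ^ k)) := by
  apply le_antisymm
  · refine grading_le q f g fun i j hij p => ?_
    have hi : i = k + j := by omega
    subst hi
    refine Submodule.mem_map.mpr ⟨x q f g ^ j * aeval (h q f g) p * y q f g ^ j,
      mono_mem_grading q f g j j p (by omega), ?_⟩
    simp only [LinearMap.mulLeft_apply]
    rw [pow_add, mul_assoc, mul_assoc, mul_assoc]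
  · rw [Submodule.map_le_iff_le_comap]
    refine grading_le q f g fun i j hij p => ?_
    simp only [Submodule.mem_comap, LinearMap.mulLeft_apply]
    have he : x q f g ^ k * (x q f g ^ i * aeval (h q f g) p * y q f g ^ j)
        = x q f g ^ (k + i) * aeval (h q f g) p * y q f g ^ j := by
      rw [pow_add, mul_assoc, mul_assoc, mul_assoc]
    rw [he]
    exact mono_mem_grading q f g (k + i) j p (by push_cast; omega)

theorem grading_shift_y (k : ℕ) :
    grading q f g (-(k : ℤ)) = (grading q f g 0).map (LinearMap.mulRight F (y q f g ^ k)) := by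
  apply le_antisymm
  · refine grading_le q f g fun i j hij p => ?_
    have hj : j = i + k := by omega
    subst hj
    refine Submodule.mem_map.mpr ⟨x q f g ^ i * aeval (h q f g) p * y q f g ^ i,
      mono_mem_grading q f g i i p (by omega), ?_⟩
    simp only [LinearMap.mulRight_apply]
    rw [pow_add, mul_assoc]
  · rw [Submodule.map_le_iff_le_comap]
    refine grading_le q f g fun i j hij p => ?_
    simp only [Submodule.mem_comap, LinearMap.mulRight_apply]
    have he : x q f g ^ i * aeval (h q f g) p * y q f g ^ j * y q f g ^ k
        = x q f g ^ i * aeval (h q f g) p * y q f g ^ (j + k) := by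
      rw [pow_add, mul_assoc]
    rw [he]
    exact mono_mem_grading q f g i (j + k) p (by push_cast; omega)
/-! ### A representation of `H_q(f,g)` on `(ℕ × ℕ) →₀ F[X]` detecting normal monomials -/

noncomputable def Xop : ((ℕ × ℕ) →₀ F[X]) →ₗ[F] ((ℕ × ℕ) →₀ F[X]) :=
  Finsupp.lsum F fun ij => Finsupp.lsingle (ij.1 + 1, ij.2)

noncomputable def Hop (f : F[X]) : ((ℕ × ℕ) →₀ F[X]) →ₗ[F] ((ℕ × ℕ) →₀ F[X]) :=
  Finsupp.lsum F fun ij => (Finsupp.lsingle ij).comp (LinearMap.mulLeft F (uP f ij.1))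

noncomputable def Yfun (q : F) (f g : F[X]) : ℕ → ℕ → (F[X] →ₗ[F] ((ℕ × ℕ) →₀ F[X]))
  | 0, j => (Finsupp.lsingle (0, j + 1)).comp (Polynomial.aeval f).toLinearMap
  | i + 1, j => q • ((Xop (F := F)).comp (Yfun q f g i j))
      + (Finsupp.lsingle (i, j)).comp (LinearMap.mulLeft F (g.comp (uP f i)))

noncomputable def Yop (q : F) (f g : F[X]) : ((ℕ × ℕ) →₀ F[X]) →ₗ[F] ((ℕ × ℕ) →₀ F[X]) :=
  Finsupp.lsum F fun ij => Yfun q f g ij.1 ij.2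

theorem Xop_single (i j : ℕ) (p : F[X]) :
    Xop (F := F) (Finsupp.single (i, j) p) = Finsupp.single (i + 1, j) p := by
  simp [Xop]

theorem Hop_single (i j : ℕ) (p : F[X]) :
    Hop f (Finsupp.single (i, j) p) = Finsupp.single (i, j) (uP f i * p) := by
  simp [Hop]

theorem Yop_single (i j : ℕ) (p : F[X]) :
    Yop q f g (Finsupp.single (i, j) p) = Yfun q f g i j p := by
  simp [Yop]

theorem Yfun_zero (j : ℕ) (p : F[X]) :
    Yfun q f g 0 j p = Finsupp.single (0, j + 1) (p.comp f) := by
  simp [Yfun, Polynomial.comp_eq_aeval]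

theorem Yfun_succ (i j : ℕ) (p : F[X]) :
    Yfun q f g (i + 1) j p
      = q • Xop (F := F) (Yfun q f g i j p) + Finsupp.single (i, j) (g.comp (uP f i) * p) := by
  simp [Yfun]

theorem Hop_pow_single (n i j : ℕ) (p : F[X]) :
    (Hop f ^ n) (Finsupp.single (i, j) p) = Finsupp.single (i, j) (uP f i ^ n * p) := by
  induction n with
  | zero => simp
  | succ n ih =>
    rw [pow_succ', Module.End.mul_apply, ih, Hop_single, pow_succ', mul_assoc]

theorem aeval_Hop_single (r : F[X]) (i j : ℕ) (p : F[X]) :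
    aeval (Hop f) r (Finsupp.single (i, j) p)
      = Finsupp.single (i, j) (r.comp (uP f i) * p) := by
  induction r using Polynomial.induction_on' with
  | add r s hr hs =>
    rw [map_add, LinearMap.add_apply, hr, hs, Polynomial.add_comp, add_mul,
      Finsupp.single_add]
  | monomial n a =>
    rw [Polynomial.aeval_monomial, Module.End.mul_apply, Module.algebraMap_end_apply,
      Hop_pow_single, Finsupp.smul_single, Polynomial.monomial_comp,
      Polynomial.smul_eq_C_mul, mul_assoc]

theorem opR1 : Hop f * Xop (F := F) = Xop (F := F) * aeval (Hop f) f := by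
  refine Finsupp.lhom_ext fun ij p => ?_
  obtain ⟨i, j⟩ := ij
  rw [Module.End.mul_apply, Module.End.mul_apply, Xop_single, Hop_single,
    aeval_Hop_single, Xop_single]
  rw [uP, uP_comm]

theorem aevalHop_Xop (s : F[X]) :
    aeval (Hop f) s * Xop (F := F) = Xop (F := F) * aeval (Hop f) (s.comp f) := by
  refine Finsupp.lhom_ext fun ij p => ?_
  obtain ⟨i, j⟩ := ij
  rw [Module.End.mul_apply, Module.End.mul_apply, Xop_single, aeval_Hop_single,
    aeval_Hop_single, Xop_single]
  congr 2
  rw [Polynomial.comp_assoc]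
  congr 1
  rw [uP, uP_comm]

theorem Yfun_poly (i j : ℕ) (r p : F[X]) :
    Yfun q f g i j (r.comp (uP f i) * p) = aeval (Hop f) (r.comp f) (Yfun q f g i j p) := by
  induction i generalizing r p with
  | zero =>
    rw [Yfun_zero, Yfun_zero, aeval_Hop_single]
    simp [uP, Polynomial.mul_comp]
  | succ i ih =>
    have hcomp : r.comp (uP f (i + 1)) = (r.comp f).comp (uP f i) := by
      rw [Polynomial.comp_assoc]
      congr 1
      rw [uP, uP_comm]
    rw [Yfun_succ, Yfun_succ, map_add, map_smul, hcomp, ih]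
    have hx := aevalHop_Xop (f := f) (r.comp f)
    have hx' : ∀ v, Xop (F := F) (aeval (Hop f) ((r.comp f).comp f) v)
        = aeval (Hop f) (r.comp f) (Xop (F := F) v) := by
      intro v
      have := congrArg (fun φ => φ v) hx
      simpa [Module.End.mul_apply] using this.symm
    rw [hx', aeval_Hop_single]
    congr 2
    ring

theorem opR2 : Yop q f g * Hop f = aeval (Hop f) f * Yop q f g := by
  refine Finsupp.lhom_ext fun ij p => ?_
  obtain ⟨i, j⟩ := ij
  rw [Module.End.mul_apply, Module.End.mul_apply, Hop_single, Yop_single, Yop_single]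
  have := Yfun_poly q f g i j X p
  rw [Polynomial.X_comp, Polynomial.X_comp] at this
  exact this

theorem opR3 : Yop q f g * Xop (F := F)
    = q • (Xop (F := F) * Yop q f g) + aeval (Hop f) g := by
  refine Finsupp.lhom_ext fun ij p => ?_
  obtain ⟨i, j⟩ := ij
  rw [LinearMap.add_apply, Module.End.mul_apply, LinearMap.smul_apply, Module.End.mul_apply,
    Xop_single, Yop_single, Yop_single, Yfun_succ, aeval_Hop_single]
noncomputable def rep : QGHA F q f g →ₐ[F] Module.End F ((ℕ × ℕ) →₀ F[X]) :=
  RingQuot.liftAlgHom F ⟨FreeAlgebra.lift F fun t => match t with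
      | QGHAGen.x => Xop (F := F)
      | QGHAGen.y => Yop q f g
      | QGHAGen.h => Hop f,
    by
      rintro a b ⟨⟩
      · simp only [map_mul, ← Polynomial.aeval_algHom_apply, FreeAlgebra.lift_ι_apply]
        exact opR1 f
      · simp only [map_mul, ← Polynomial.aeval_algHom_apply, FreeAlgebra.lift_ι_apply]
        exact opR2 q f g
      · simp only [map_mul, map_add, map_smul, ← Polynomial.aeval_algHom_apply,
          FreeAlgebra.lift_ι_apply]
        exact opR3 q f g⟩

theorem rep_x : rep q f g (x q f g) = Xop (F := F) := by
  unfold rep QGHA.x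
  exact (RingQuot.liftAlgHom_mkAlgHom_apply _ _ _ _).trans (FreeAlgebra.lift_ι_apply _ _)

theorem rep_y : rep q f g (y q f g) = Yop q f g := by
  unfold rep QGHA.y
  exact (RingQuot.liftAlgHom_mkAlgHom_apply _ _ _ _).trans (FreeAlgebra.lift_ι_apply _ _)

theorem rep_h : rep q f g (h q f g) = Hop f := by
  unfold rep QGHA.h
  exact (RingQuot.liftAlgHom_mkAlgHom_apply _ _ _ _).trans (FreeAlgebra.lift_ι_apply _ _)

noncomputable def ev : QGHA F q f g →ₗ[F] ((ℕ × ℕ) →₀ F[X]) where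
  toFun a := rep q f g a (Finsupp.single (0, 0) 1)
  map_add' a b := by simp only [map_add, LinearMap.add_apply]
  map_smul' c a := by simp only [map_smul, LinearMap.smul_apply, RingHom.id_apply]

theorem Yop_pow_aux (n j : ℕ) :
    (Yop q f g ^ n) (Finsupp.single ((0 : ℕ), j) (1 : F[X])) = Finsupp.single (0, j + n) 1 := by
  induction n with
  | zero => rfl
  | succ n ih =>
    rw [pow_succ', Module.End.mul_apply, ih, Yop_single, Yfun_zero, Polynomial.one_comp]
    rfl

theorem Xop_pow_aux (n i j : ℕ) (p : F[X]) :
    (Xop (F := F) ^ n) (Finsupp.single (i, j) p) = Finsupp.single (i + n, j) p := by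
  induction n with
  | zero => rfl
  | succ n ih =>
    rw [pow_succ', Module.End.mul_apply, ih, Xop_single]
    rfl

theorem ev_mono (i j : ℕ) (p : F[X]) :
    ev q f g (x q f g ^ i * aeval (h q f g) p * y q f g ^ j) = Finsupp.single (i, j) p := by
  show rep q f g _ (Finsupp.single (0, 0) 1) = _
  rw [map_mul, map_mul, map_pow, map_pow, rep_x, rep_y, ← Polynomial.aeval_algHom_apply,
    rep_h, Module.End.mul_apply, Module.End.mul_apply, Yop_pow_aux, aeval_Hop_single]
  show (Xop (F := F) ^ i) (Finsupp.single ((0 : ℕ), 0 + j) _) = _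
  rw [Xop_pow_aux]
  simp [uP]

noncomputable def sig : ((ℕ × ℕ) →₀ F[X]) →ₗ[F] QGHA F q f g :=
  Finsupp.lsum F fun ij => (LinearMap.mulRight F (y q f g ^ ij.2)).comp
    ((LinearMap.mulLeft F (x q f g ^ ij.1)).comp (Polynomial.aeval (h q f g)).toLinearMap)

theorem sig_single (i j : ℕ) (p : F[X]) :
    sig q f g (Finsupp.single (i, j) p) = x q f g ^ i * aeval (h q f g) p * y q f g ^ j := by
  simp [sig]

theorem mem_T (a : QGHA F q f g) : a ∈ ⨆ k : ℤ, grading q f g k := by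
  set T := ⨆ k : ℤ, grading q f g k with hT
  have hmulmem : ∀ z : QGHA F q f g,
      (∀ k : ℤ, ∀ c ∈ grading q f g k, z * c ∈ T) → ∀ t ∈ T, z * t ∈ T := by
    intro z hz t ht
    have hle : T ≤ T.comap (LinearMap.mulLeft F z) :=
      iSup_le fun k => fun u hu => Submodule.mem_comap.mpr (hz k u hu)
    exact hle ht
  let NN : Subalgebra F (QGHA F q f g) :=
    { carrier := {z | ∀ t ∈ T, z * t ∈ T}
      mul_mem' := fun {a b} ha hb t ht => by
        rw [mul_assoc]; exact ha _ (hb t ht)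
      add_mem' := fun {a b} ha hb t ht => by
        rw [add_mul]; exact Submodule.add_mem T (ha t ht) (hb t ht)
      algebraMap_mem' := fun c t ht => by
        rw [← Algebra.smul_def]; exact Submodule.smul_mem T c ht }
  have hxN : x q f g ∈ NN :=
    hmulmem _ fun k c hc => le_iSup (grading q f g) (k + 1) (x_mul_mem q f g hc)
  have hyN : y q f g ∈ NN :=
    hmulmem _ fun k c hc => le_iSup (grading q f g) (k - 1) (y_mul_mem q f g hc)
  have hhN : h q f g ∈ NN := by
    refine hmulmem _ fun k c hc => ?_
    have := poly_mul_mem q f g X hc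
    rw [Polynomial.aeval_X] at this
    exact le_iSup (grading q f g) k this
  have h1T : (1 : QGHA F q f g) ∈ T := le_iSup (grading q f g) 0 (one_mem_grading_zero q f g)
  have hall : ∀ b : FreeAlgebra F QGHAGen, RingQuot.mkAlgHom F (QGHARel F q f g) b ∈ NN := by
    intro b
    induction b using FreeAlgebra.induction with
    | grade0 r => rw [AlgHom.commutes]; exact NN.algebraMap_mem r
    | grade1 t =>
      cases t with
      | x => exact hxN
      | y => exact hyN
      | h => exact hhN
    | mul a b ha hb => rw [map_mul]; exact NN.mul_mem ha hb
    | add a b ha hb => rw [map_add]; exact NN.add_mem ha hb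
  obtain ⟨b, rfl⟩ := RingQuot.mkAlgHom_surjective F (QGHARel F q f g) a
  have := hall b 1 h1T
  have e := mul_one (M := QGHA F q f g) (RingQuot.mkAlgHom F (QGHARel F q f g) b)
  exact (congrArg (· ∈ T) e).mp this

theorem sig_ev (a : QGHA F q f g) : sig q f g (ev q f g a) = a := by
  have hker : (⨆ k : ℤ, grading q f g k) ≤
      LinearMap.ker ((sig q f g).comp (ev q f g) - LinearMap.id) := by
    refine iSup_le fun k => grading_le q f g fun i j hij p => ?_
    rw [LinearMap.mem_ker, LinearMap.sub_apply, LinearMap.comp_apply, LinearMap.id_apply,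
      ev_mono, sig_single, sub_self]
  have := hker (mem_T q f g a)
  rw [LinearMap.mem_ker, LinearMap.sub_apply, LinearMap.comp_apply, LinearMap.id_apply,
    sub_eq_zero] at this
  exact this

theorem ev_inj : Function.Injective (ev q f g) :=
  Function.LeftInverse.injective (sig_ev q f g)

theorem indep_of_supported {ι : Type*} (N : ι → Submodule F (QGHA F q f g))
    (W : ι → Set (ℕ × ℕ)) (hW : Pairwise (Function.onFun Disjoint W))
    (hmap : ∀ k, N k ≤ (Finsupp.supported F[X] F (W k)).comap (ev q f g)) :
    iSupIndep N := by
  intro k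
  rw [disjoint_iff_inf_le]
  rintro a ⟨haN, haS⟩
  have h1 : ev q f g a ∈ Finsupp.supported F[X] F (W k) := hmap k haN
  have h2 : ev q f g a ∈ Finsupp.supported F[X] F (⋃ (l : ι) (_ : l ≠ k), W l) := by
    have hle : (⨆ (l : ι) (_ : l ≠ k), N l) ≤
        (Finsupp.supported F[X] F (⋃ (l : ι) (_ : l ≠ k), W l)).comap (ev q f g) :=
      iSup_le fun l => iSup_le fun hl => (hmap l).trans
        (Submodule.comap_mono (Finsupp.supported_mono
          (Set.subset_iUnion₂ (s := fun l (_ : l ≠ k) => W l) l hl)))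
    exact hle haS
  have hd : Disjoint (W k) (⋃ (l : ι) (_ : l ≠ k), W l) := by
    rw [Set.disjoint_left]
    intro p hp hp'
    obtain ⟨l, hl, hpl⟩ := Set.mem_iUnion₂.mp hp'
    exact Set.disjoint_left.mp (hW hl) hpl hp
  have h0 : ev q f g a = 0 := by
    have hdis := Finsupp.disjoint_supported_supported (M := F[X]) (R := F) hd
    have := hdis.le_bot (Submodule.mem_inf.mpr ⟨h1, h2⟩)
    simpa using this
  rw [Submodule.mem_bot]
  exact ev_inj q f g (by rw [h0, map_zero])

theorem indep_grading : iSupIndep (grading q f g) := by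
  refine indep_of_supported q f g _ (fun k => {p : ℕ × ℕ | (p.1 : ℤ) - p.2 = k}) ?_ ?_
  · intro k l hkl
    rw [Function.onFun, Set.disjoint_left]
    rintro ⟨i, j⟩ hp hp'
    exact hkl (by rw [← hp, ← hp'])
  · refine fun k => grading_le q f g fun i j hij p => ?_
    rw [Submodule.mem_comap, ev_mono]
    exact Finsupp.single_mem_supported F p hij

theorem indep_Mii : iSupIndep (fun i : ℕ => Mij q f g i i) := by
  refine indep_of_supported q f g _ (fun i => {((i, i) : ℕ × ℕ)}) ?_ ?_
  · intro k l hkl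
    rw [Function.onFun, Set.disjoint_left]
    rintro p hp hp'
    rw [Set.mem_singleton_iff] at hp hp'
    apply hkl
    have h2 : ((k, k) : ℕ × ℕ) = (l, l) := by rw [← hp, hp']
    exact (Prod.ext_iff.mp h2).1
  · refine fun i => Submodule.span_le.mpr ?_
    rintro a ⟨p, rfl⟩
    rw [SetLike.mem_coe, Submodule.mem_comap, ev_mono]
    exact Finsupp.single_mem_supported F p rfl
end QGHAAux

/-- The components `QGHA.grading q f g k` form a ℤ-grading of the algebra
`H_q(f,g)` (they are independent with internal direct sum the whole algebra, `1` lies in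
degree `0`, and the product of degrees `m` and `n` lands in degree `m+n`); the degree-`0`
component is `⊕_{i≥0} x^i F[h] y^i`, and for every `k ≥ 0` the degree-`k` component equals
`x^k H_0` while the degree-`(−k)` component equals `H_0 y^k`. -/
theorem qgha_grading {F : Type*} [Field F] (q : F) (f g : F[X]) :
    DirectSum.IsInternal (QGHA.grading q f g) ∧
    (1 : QGHA F q f g) ∈ QGHA.grading q f g 0 ∧
    (∀ m n : ℤ, QGHA.grading q f g m * QGHA.grading q f g n ≤ QGHA.grading q f g (m + n)) ∧
    (QGHA.grading q f g 0 = ⨆ i : ℕ, QGHA.Mij q f g i i) ∧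
    iSupIndep (fun i : ℕ => QGHA.Mij q f g i i) ∧
    (∀ k : ℕ,
      QGHA.grading q f g (k : ℤ) =
        (QGHA.grading q f g 0).map (LinearMap.mulLeft F (QGHA.x q f g ^ k)) ∧
      QGHA.grading q f g (-(k : ℤ)) =
        (QGHA.grading q f g 0).map (LinearMap.mulRight F (QGHA.y q f g ^ k))) := by
  refine ⟨?_, QGHAAux.one_mem_grading_zero q f g, QGHAAux.grading_mul q f g,
    QGHAAux.grading_zero_eq q f g, QGHAAux.indep_Mii q f g,
    fun k => ⟨QGHAAux.grading_shift_x q f g k, QGHAAux.grading_shift_y q f g k⟩⟩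
  rw [DirectSum.isInternal_submodule_iff_iSupIndep_and_iSup_eq_top]
  exact ⟨QGHAAux.indep_grading q f g,
    eq_top_iff.mpr fun a _ => QGHAAux.mem_T q f g a⟩
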